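/- arXiv:1408.0525 — 5 statements merged into one kernel-verified Lean document; each statement's English description precedes it below -/
import Mathlib

section
/- Define A ≺ B for positive real operators A, B on a Hilbert space H to mean A - B = Re(B)^{1/2} X Re(B)^{1/2} for some bounded operator X. Then ≺ is reflexive and transitive (a pre-order) on the set of positive real operators. -/
open ContinuousLinearMap
open scoped InnerProductSpace

variable {H : Type*} [NormedAddCommGroup H] [InnerProductSpace ℂ H] [CompleteSpace H]

/-- The real part `(T + T*)/2` of a bounded operator. -/
noncomputable def opRe (T : H →L[ℂ] H) : H →L[ℂ] H :=
  (2 : ℂ)⁻¹ • (T + ContinuousLinearMap.adjoint T)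

/-- The positive square root of the real part of an operator. -/
noncomputable def sqrtRe (T : H →L[ℂ] H) : H →L[ℂ] H := CFC.sqrt (opRe T)

/-- The pre-order `A ≺ B` on positive real operators. -/
noncomputable def prec (A B : H →L[ℂ] H) : Prop :=
  ∃ X : H →L[ℂ] H, A - B = sqrtRe B ∘L X ∘L sqrtRe B

/-- A Douglas-type factorization: if `‖S x‖ ≤ k * ‖T x‖` for all `x`, then `S = W ∘L T`
for some bounded operator `W`. -/
theorem douglas (S T : H →L[ℂ] H) (k : ℝ) (hk : ∀ x, ‖S x‖ ≤ k * ‖T x‖) :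
    ∃ W : H →L[ℂ] H, S = W ∘L T := by
  classical
  have key : ∀ x y : H, T x = T y → S x = S y := by
    intro x y h
    have h1 : ‖S x - S y‖ ≤ k * ‖T x - T y‖ := by
      have := hk (x - y); simpa [map_sub] using this
    rw [h] at h1
    simp only [sub_self, norm_zero, mul_zero] at h1
    have h2 : ‖S x - S y‖ = 0 := le_antisymm h1 (norm_nonneg _)
    rwa [norm_sub_eq_zero_iff] at h2
  set p : Submodule ℂ H := LinearMap.range (T : H →ₗ[ℂ] H) with hp
  have hmem : ∀ y : p, ∃ x : H, T x = (y : H) := fun y => y.2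
  have hchoose : ∀ y : p, T (hmem y).choose = (y : H) := fun y => (hmem y).choose_spec
  set g : p →ₗ[ℂ] H :=
    { toFun := fun y => S (hmem y).choose
      map_add' := by
        intro y z
        show S _ = S _ + S _
        have h1 : S ((hmem (y + z)).choose) = S ((hmem y).choose + (hmem z).choose) :=
          key _ _ (by rw [map_add, hchoose, hchoose, hchoose]; rfl)
        rw [h1, map_add]
      map_smul' := by
        intro c y
        show S _ = c • S _
        have h1 : S ((hmem (c • y)).choose) = S (c • (hmem y).choose) :=
          key _ _ (by rw [map_smul, hchoose, hchoose]; rfl)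
        rw [h1, map_smul] } with hg
  have hgb : ∀ y : p, ‖g y‖ ≤ k * ‖y‖ := by
    intro y
    have := hk (hmem y).choose
    rw [hchoose] at this
    simpa [hg] using this
  set g' : p →L[ℂ] H := g.mkContinuous k hgb with hg'
  set K : Submodule ℂ H := p.topologicalClosure with hK
  haveI : CompleteSpace K := p.isClosed_topologicalClosure.completeSpace_coe
  set eL : p →ₗ[ℂ] K := Submodule.inclusion p.le_topologicalClosure with heL
  set e : p →L[ℂ] K := eL.mkContinuous 1 (fun y => by
    simp [heL, Submodule.inclusion]) with he
  have hnorm : ∀ y : p, ‖e y‖ = ‖y‖ := fun y => rfl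
  have h_e : IsUniformInducing e :=
    (AddMonoidHomClass.isometry_of_norm e hnorm).isUniformInducing
  have himg : ((↑) : K → H) '' Set.range e = (p : Set H) := by
    ext z
    constructor
    · rintro ⟨w, ⟨y, rfl⟩, rfl⟩
      exact y.2
    · rintro hz
      exact ⟨e ⟨z, hz⟩, ⟨⟨z, hz⟩, rfl⟩, rfl⟩
  have h_dense : DenseRange e := by
    intro v
    rw [closure_subtype, himg]
    exact v.2
  set W0 : K →L[ℂ] H := g'.extend e with hW0
  refine ⟨W0 ∘L (K.orthogonalProjectionOnto : H →L[ℂ] K), ?_⟩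
  ext x
  have hxp : T x ∈ p := ⟨x, rfl⟩
  have hxK : T x ∈ K := p.le_topologicalClosure hxp
  have hproj : K.orthogonalProjectionOnto (T x) = ⟨T x, hxK⟩ :=
    Submodule.orthogonalProjectionOnto_mem_subspace_eq_self ⟨T x, hxK⟩
  have heq : e ⟨T x, hxp⟩ = ⟨T x, hxK⟩ := rfl
  have hext : W0 (e ⟨T x, hxp⟩) = g' ⟨T x, hxp⟩ :=
    ContinuousLinearMap.extend_eq (f := g') (e := e) h_dense h_e ⟨T x, hxp⟩
  calc S x = S (hmem ⟨T x, hxp⟩).choose := (key _ _ (hchoose ⟨T x, hxp⟩)).symm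
    _ = g' ⟨T x, hxp⟩ := rfl
    _ = W0 (e ⟨T x, hxp⟩) := hext.symm
    _ = (W0 ∘L (K.orthogonalProjectionOnto : H →L[ℂ] K)) (T x) := by
        rw [heq, comp_apply, hproj]

lemma opRe_add (P Q : H →L[ℂ] H) : opRe (P + Q) = opRe P + opRe Q := by
  simp only [opRe, map_add, ← smul_add]
  congr 1
  abel

lemma opRe_conj (P Q : H →L[ℂ] H) (hQ : ContinuousLinearMap.adjoint Q = Q) :
    opRe (Q ∘L P ∘L Q) = Q ∘L opRe P ∘L Q := by
  simp only [opRe, adjoint_comp, hQ, comp_add, add_comp, comp_smul, smul_comp]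
  rw [comp_assoc]

lemma sqrtRe_selfAdjoint_mul (P : H →L[ℂ] H) (hP : (opRe P).IsPositive) :
    ContinuousLinearMap.adjoint (sqrtRe P) = sqrtRe P ∧ sqrtRe P ∘L sqrtRe P = opRe P := by
  have h0 : (0 : H →L[ℂ] H) ≤ opRe P := (nonneg_iff_isPositive _).2 hP
  have h1 : (0 : H →L[ℂ] H) ≤ sqrtRe P := CFC.sqrt_nonneg (a := opRe P)
  exact ⟨((nonneg_iff_isPositive _).1 h1).isSelfAdjoint.adjoint_eq,
    CFC.sqrt_mul_sqrt_self (opRe P) h0⟩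

theorem stmt7 :
    (∀ A : H →L[ℂ] H, (opRe A).IsPositive → prec A A) ∧
    (∀ A B C : H →L[ℂ] H, (opRe A).IsPositive → (opRe B).IsPositive →
      (opRe C).IsPositive → prec A B → prec B C → prec A C) := by
  constructor
  · intro A _
    exact ⟨0, by simp⟩
  · intro A B C hA hB hC ⟨X, hX⟩ ⟨Y, hY⟩
    obtain ⟨hadjB, hmulB⟩ := sqrtRe_selfAdjoint_mul B hB
    obtain ⟨hadjC, hmulC⟩ := sqrtRe_selfAdjoint_mul C hC
    -- Re B = Re C + √C (Re Y) √C
    have hBC : B = C + sqrtRe C ∘L Y ∘L sqrtRe C := by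
      rw [← hY]; abel
    have hRe : opRe B = opRe C + sqrtRe C ∘L opRe Y ∘L sqrtRe C := by
      rw [hBC, opRe_add, opRe_conj _ _ hadjC]
    -- the pointwise norm estimate
    set kk : ℝ := 1 + ‖opRe Y‖ with hkk
    have hk0 : (0 : ℝ) ≤ kk := by positivity
    have hbound : ∀ x, ‖sqrtRe B x‖ ≤ Real.sqrt kk * ‖sqrtRe C x‖ := by
      intro x
      have hsq : ∀ (P : H →L[ℂ] H), ContinuousLinearMap.adjoint (sqrtRe P) = sqrtRe P →
          sqrtRe P ∘L sqrtRe P = opRe P →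
          ‖sqrtRe P x‖ ^ 2 = RCLike.re (⟪x, (opRe P) x⟫_ℂ) := by
        intro P hadj hmul
        rw [← hmul]
        have h1 := adjoint_inner_left (sqrtRe P) x (sqrtRe P x)
        rw [hadj] at h1
        rw [← inner_self_eq_norm_sq (𝕜 := ℂ), comp_apply, ← h1]
        exact inner_re_symm _ _
      have hB2 := hsq B hadjB hmulB
      have hC2 := hsq C hadjC hmulC
      have hsplit : RCLike.re (⟪x, (opRe B) x⟫_ℂ) =
          RCLike.re (⟪x, (opRe C) x⟫_ℂ) +
          RCLike.re (⟪sqrtRe C x, (opRe Y) (sqrtRe C x)⟫_ℂ) := by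
        rw [hRe]
        have h2 : ⟪x, (sqrtRe C ∘L opRe Y ∘L sqrtRe C) x⟫_ℂ =
            ⟪sqrtRe C x, (opRe Y) (sqrtRe C x)⟫_ℂ := by
          have h3 := adjoint_inner_right (sqrtRe C) x ((opRe Y) (sqrtRe C x))
          rw [hadjC] at h3
          rw [comp_apply, comp_apply, h3]
        rw [add_apply, inner_add_right, map_add, h2]
      have hcs : RCLike.re (⟪sqrtRe C x, (opRe Y) (sqrtRe C x)⟫_ℂ) ≤
          ‖opRe Y‖ * ‖sqrtRe C x‖ ^ 2 := by
        calc RCLike.re (⟪sqrtRe C x, (opRe Y) (sqrtRe C x)⟫_ℂ)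
            ≤ ‖sqrtRe C x‖ * ‖(opRe Y) (sqrtRe C x)‖ := re_inner_le_norm _ _
          _ ≤ ‖sqrtRe C x‖ * (‖opRe Y‖ * ‖sqrtRe C x‖) := by
              gcongr; exact le_opNorm _ _
          _ = ‖opRe Y‖ * ‖sqrtRe C x‖ ^ 2 := by ring
      have hsq2 : ‖sqrtRe B x‖ ^ 2 ≤ kk * ‖sqrtRe C x‖ ^ 2 := by
        rw [hB2, hsplit, hkk]
        nlinarith [hC2, hcs]
      calc ‖sqrtRe B x‖ = Real.sqrt (‖sqrtRe B x‖ ^ 2) := by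
            rw [Real.sqrt_sq (norm_nonneg _)]
        _ ≤ Real.sqrt (kk * ‖sqrtRe C x‖ ^ 2) := Real.sqrt_le_sqrt hsq2
        _ = Real.sqrt kk * ‖sqrtRe C x‖ := by
            rw [Real.sqrt_mul hk0, Real.sqrt_sq (norm_nonneg _)]
    obtain ⟨W, hW⟩ := douglas (sqrtRe B) (sqrtRe C) (Real.sqrt kk) hbound
    have hW' : sqrtRe B = sqrtRe C ∘L ContinuousLinearMap.adjoint W := by
      conv_lhs => rw [← hadjB, hW]
      rw [adjoint_comp, hadjC]
    refine ⟨ContinuousLinearMap.adjoint W ∘L X ∘L W + Y, ?_⟩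
    have hAC : A - C = (A - B) + (B - C) := by abel
    rw [hAC, hX, hY]
    have h1 : sqrtRe B ∘L X ∘L sqrtRe B =
        sqrtRe C ∘L (ContinuousLinearMap.adjoint W ∘L X ∘L W) ∘L sqrtRe C := by
      nth_rewrite 1 [hW']
      rw [hW]
      simp only [comp_assoc]
    rw [h1, add_comp, comp_add]
end

section
/- Let A, B be positive real operators on a Hilbert space H with A ≺ B. Then every vector in the kernel of Re(B) lies in the kernel of Re(A), and on the kernel of Re(B) the operators A and B agree: A h = B h = i·Im(B) h for all h ∈ Ker Re(B). -/
open ContinuousLinearMap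

variable {H : Type*} [NormedAddCommGroup H] [InnerProductSpace ℂ H] [CompleteSpace H]

/-- The imaginary part `(T - T*)/(2i)` of a bounded operator. -/
noncomputable def opIm (T : H →L[ℂ] H) : H →L[ℂ] H :=
  (2 * Complex.I)⁻¹ • (T - ContinuousLinearMap.adjoint T)

set_option synthInstance.maxHeartbeats 1000000 in
theorem stmt10 (A B : H →L[ℂ] H)
    (hA : (opRe A).IsPositive) (hB : (opRe B).IsPositive)
    (h : ∃ X : H →L[ℂ] H, A - B = sqrtRe B ∘L X ∘L sqrtRe B) :
    ∀ h : H, opRe B h = 0 →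
      opRe A h = 0 ∧ A h = B h ∧ B h = Complex.I • opIm B h := by
  obtain ⟨X, hX⟩ := h
  intro v hv
  set S : H →L[ℂ] H := sqrtRe B with hS
  have hBnn : 0 ≤ opRe B := (nonneg_iff_isPositive _).2 hB
  have hSpos : S.IsPositive := (nonneg_iff_isPositive S).1 (CFC.sqrt_nonneg (opRe B))
  have hSsa : ContinuousLinearMap.adjoint S = S := hSpos.isSelfAdjoint
  have hSS : S ∘L S = opRe B := by
    have := CFC.sqrt_mul_sqrt_self (opRe B) hBnn
    simpa [hS, sqrtRe, ContinuousLinearMap.mul_def] using this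
  have hSv : S v = 0 := by
    have hinner : (inner ℂ (S v) (S v) : ℂ) = 0 := by
      calc (inner ℂ (S v) (S v) : ℂ)
          = inner ℂ v ((ContinuousLinearMap.adjoint S) (S v)) := by
            rw [ContinuousLinearMap.adjoint_inner_right]
        _ = inner ℂ v ((S ∘L S) v) := by rw [hSsa]; rfl
        _ = (inner ℂ v ((opRe B) v) : ℂ) := by rw [hSS]
        _ = 0 := by rw [hv, inner_zero_right]
    exact inner_self_eq_zero.1 hinner
  have hABv : A v = B v := by
    have h0 : (A - B) v = 0 := by rw [hX]; simp [hSv]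
    have := h0
    rw [ContinuousLinearMap.sub_apply, sub_eq_zero] at this
    exact this
  have hadj : ContinuousLinearMap.adjoint (A - B) v = 0 := by
    rw [hX]
    simp only [adjoint_comp, hSsa]
    simp [hSv]
  have hadjAB : (ContinuousLinearMap.adjoint A) v = (ContinuousLinearMap.adjoint B) v := by
    rw [map_sub, ContinuousLinearMap.sub_apply, sub_eq_zero] at hadj
    exact hadj
  have hReA : opRe A v = 0 := by
    simp only [opRe, ContinuousLinearMap.smul_apply, ContinuousLinearMap.add_apply,
      hABv, hadjAB]
    simpa [opRe] using hv
  refine ⟨hReA, hABv, ?_⟩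
  have h2 : Complex.I * (2 * Complex.I)⁻¹ = (2:ℂ)⁻¹ := by
    field_simp
  have hdecomp : opRe B v + Complex.I • opIm B v = B v := by
    simp only [opRe, opIm, ContinuousLinearMap.smul_apply, ContinuousLinearMap.add_apply,
      ContinuousLinearMap.sub_apply, smul_smul, h2]
    module
  rw [← hdecomp, hv, zero_add]
end

section
/- Let N₁ : K → K₁ and N₂ : K → K₂ be bounded Hilbert space operators and suppose there exists a bounded operator Z with N₁*N₁ + N₂*N₂ = Re(N₂* Z N₁). Then ‖N₁ x‖² ≤ ‖Z‖·‖N₁ x‖·‖N₂ x‖ and ‖N₂ x‖² ≤ ‖Z‖·‖N₁ x‖·‖N₂ x‖ for all x ∈ K; in particular Ker N₁ = Ker N₂. -/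
open ContinuousLinearMap

variable {H : Type*} [NormedAddCommGroup H] [InnerProductSpace ℂ H] [CompleteSpace H]

theorem stmt11 {K K₁ K₂ : Type*}
    [NormedAddCommGroup K] [InnerProductSpace ℂ K] [CompleteSpace K]
    [NormedAddCommGroup K₁] [InnerProductSpace ℂ K₁] [CompleteSpace K₁]
    [NormedAddCommGroup K₂] [InnerProductSpace ℂ K₂] [CompleteSpace K₂]
    (N₁ : K →L[ℂ] K₁) (N₂ : K →L[ℂ] K₂) (Z : K₁ →L[ℂ] K₂)
    (h : ContinuousLinearMap.adjoint N₁ ∘L N₁ + ContinuousLinearMap.adjoint N₂ ∘L N₂ =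
      opRe (ContinuousLinearMap.adjoint N₂ ∘L Z ∘L N₁)) :
    (∀ x : K, ‖N₁ x‖ ^ 2 ≤ ‖Z‖ * ‖N₁ x‖ * ‖N₂ x‖ ∧
      ‖N₂ x‖ ^ 2 ≤ ‖Z‖ * ‖N₁ x‖ * ‖N₂ x‖) ∧
    LinearMap.ker (N₁ : K →ₗ[ℂ] K₁) = LinearMap.ker (N₂ : K →ₗ[ℂ] K₂) := by
  have key : ∀ x : K, ‖N₁ x‖ ^ 2 + ‖N₂ x‖ ^ 2 ≤ ‖Z‖ * ‖N₁ x‖ * ‖N₂ x‖ := by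
    intro x
    set T : K →L[ℂ] K := ContinuousLinearMap.adjoint N₂ ∘L Z ∘L N₁ with hT
    have hinner : (inner ℂ x ((ContinuousLinearMap.adjoint N₁ ∘L N₁ +
        ContinuousLinearMap.adjoint N₂ ∘L N₂) x) : ℂ) = inner ℂ x (opRe T x) := by
      rw [h]
    have hL : (inner ℂ x ((ContinuousLinearMap.adjoint N₁ ∘L N₁ +
        ContinuousLinearMap.adjoint N₂ ∘L N₂) x) : ℂ)
        = ((‖N₁ x‖ ^ 2 + ‖N₂ x‖ ^ 2 : ℝ) : ℂ) := by
      simp only [ContinuousLinearMap.add_apply, inner_add_right,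
        ContinuousLinearMap.coe_comp', Function.comp_apply,
        ContinuousLinearMap.adjoint_inner_right, inner_self_eq_norm_sq_to_K]
      norm_cast
    have hR : (inner ℂ x (opRe T x) : ℂ)
        = (2 : ℂ)⁻¹ * ((inner ℂ x (T x) : ℂ) + starRingEnd ℂ (inner ℂ x (T x))) := by
      simp only [opRe, ContinuousLinearMap.smul_apply, ContinuousLinearMap.add_apply,
        inner_smul_right, inner_add_right, ContinuousLinearMap.adjoint_inner_right]
      rw [← inner_conj_symm]
      simp
    have hEq : (‖N₁ x‖ ^ 2 + ‖N₂ x‖ ^ 2 : ℝ) = (inner ℂ x (T x) : ℂ).re := by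
      have := hL.symm.trans (hinner.trans hR)
      have h2 : ((‖N₁ x‖ ^ 2 + ‖N₂ x‖ ^ 2 : ℝ) : ℂ)
          = (((inner ℂ x (T x) : ℂ).re : ℝ) : ℂ) := by
        rw [this, Complex.add_conj]
        push_cast
        ring
      exact_mod_cast h2
    have hTval : (inner ℂ x (T x) : ℂ) = inner ℂ (N₂ x) (Z (N₁ x)) := by
      simp [hT, ContinuousLinearMap.adjoint_inner_right]
    rw [hEq, hTval]
    calc (inner ℂ (N₂ x) (Z (N₁ x)) : ℂ).re ≤ ‖(inner ℂ (N₂ x) (Z (N₁ x)) : ℂ)‖ :=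
          Complex.re_le_norm _
      _ ≤ ‖N₂ x‖ * ‖Z (N₁ x)‖ := norm_inner_le_norm _ _
      _ ≤ ‖N₂ x‖ * (‖Z‖ * ‖N₁ x‖) := by
          gcongr
          exact Z.le_opNorm _
      _ = ‖Z‖ * ‖N₁ x‖ * ‖N₂ x‖ := by ring
  refine ⟨fun x => ⟨?_, ?_⟩, ?_⟩
  · nlinarith [key x, sq_nonneg ‖N₂ x‖]
  · nlinarith [key x, sq_nonneg ‖N₁ x‖]
  · ext x
    simp only [LinearMap.mem_ker, ContinuousLinearMap.coe_coe]
    constructor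
    · intro h1
      have := key x
      rw [h1] at this
      simp at this
      have h0 : ‖N₂ x‖ ^ 2 = 0 := by simp [this]
      exact norm_eq_zero.mp (pow_eq_zero_iff two_ne_zero |>.mp h0)
    · intro h2
      have := key x
      rw [h2] at this
      simp at this
      have h0 : ‖N₁ x‖ ^ 2 = 0 := by simp [this]
      exact norm_eq_zero.mp (pow_eq_zero_iff two_ne_zero |>.mp h0)
end

section
/- Let W = [[W₁₁, W₁₂],[W₂₁, W₂₂]] be a bounded operator on H ⊕ H satisfying W* J W ≤ J where J = [[0, −I],[−I, 0]]. Let A be positive real with W₂₁A + W₂₂ invertible, and set T_W[A] = (W₁₁A + W₁₂)(W₂₁A + W₂₂)^{-1}. Then Re(T_W[A]) ≥ (W₂₁A + W₂₂)^{-*} Re(A) (W₂₁A + W₂₂)^{-1}; in particular T_W[A] is positive real. -/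
open ContinuousLinearMap

variable {H : Type*} [NormedAddCommGroup H] [InnerProductSpace ℂ H] [CompleteSpace H]

lemma opRe_isSelfAdjoint (T : H →L[ℂ] H) : IsSelfAdjoint (opRe T) := by
  rw [IsSelfAdjoint, opRe, star_smul, star_add]
  simp only [star_eq_adjoint, adjoint_adjoint]
  rw [add_comm]
  congr 1
  simp [Complex.ext_iff]

lemma re_inner_opRe (T : H →L[ℂ] H) (u : H) :
    (inner ℂ (opRe T u) u : ℂ).re = (inner ℂ (T u) u : ℂ).re := by
  simp only [opRe, smul_apply, add_apply, inner_smul_left, inner_add_left,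
    adjoint_inner_left]
  rw [← inner_conj_symm u (T u), Complex.add_conj]
  simp [Complex.ext_iff]

theorem stmt15 (W11 W12 W21 W22 : H →L[ℂ] H)
    (hJ : ∀ x y : H, (inner ℂ x y : ℂ).re ≤
      (inner ℂ (W11 x + W12 y) (W21 x + W22 y) : ℂ).re)
    (A : H →L[ℂ] H) (hA : (opRe A).IsPositive)
    (Dinv : H →L[ℂ] H)
    (hD1 : (W21 ∘L A + W22) ∘L Dinv = 1) (hD2 : Dinv ∘L (W21 ∘L A + W22) = 1) :
    (opRe ((W11 ∘L A + W12) ∘L Dinv) -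
        ContinuousLinearMap.adjoint Dinv ∘L opRe A ∘L Dinv).IsPositive ∧
    (opRe ((W11 ∘L A + W12) ∘L Dinv)).IsPositive := by
  set T := (W11 ∘L A + W12) ∘L Dinv with hT
  have key : ∀ u : H, (inner ℂ (A (Dinv u)) (Dinv u) : ℂ).re ≤ (inner ℂ (T u) u : ℂ).re := by
    intro u
    have h := hJ (A (Dinv u)) (Dinv u)
    have hu : W21 (A (Dinv u)) + W22 (Dinv u) = u := by
      have := congrArg (fun (S : H →L[ℂ] H) => S u) hD1
      simpa using this
    have hTu : T u = W11 (A (Dinv u)) + W12 (Dinv u) := by simp [hT]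
    rw [hu, ← hTu] at h
    exact h
  have hconj : (ContinuousLinearMap.adjoint Dinv ∘L opRe A ∘L Dinv).IsPositive :=
    hA.adjoint_conj Dinv
  have hM : (opRe T - ContinuousLinearMap.adjoint Dinv ∘L opRe A ∘L Dinv).IsPositive := by
    constructor
    · exact ((opRe_isSelfAdjoint T).sub hconj.isSelfAdjoint).isSymmetric
    · intro u
      rw [reApplyInnerSelf, sub_apply, inner_sub_left, map_sub]
      simp only [RCLike.re_to_complex]
      have h1 : (inner ℂ ((ContinuousLinearMap.adjoint Dinv ∘L opRe A ∘L Dinv) u) u : ℂ).re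
          = (inner ℂ (A (Dinv u)) (Dinv u) : ℂ).re := by
        rw [comp_apply, adjoint_inner_left, comp_apply]
        exact re_inner_opRe A (Dinv u)
      rw [h1, re_inner_opRe]
      linarith [key u]
  exact ⟨hM, by
    have := hM.add hconj
    rwa [sub_add_cancel] at this⟩
end

section
/- Let W be an invertible operator on H ⊕ H with W*JW ≤ J where J = [[0,−I],[−I,0]], let Ĵ = [[I,0],[0,−I]], and set W̃ = Ĵ W^{-1} Ĵ with block entries W̃ᵢⱼ. Then for positive real operators A, B in the domain of T_W (i.e. with W₂₁A+W₂₂ and W₂₁B+W₂₂ invertible), one has T_W[A] − T_W[B] = (W̃₁₁ + A W̃₂₁)^{-1}(A − B)(W₂₂ + W₂₁B)^{-1}. -/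
open ContinuousLinearMap

variable {H : Type*} [NormedAddCommGroup H] [InnerProductSpace ℂ H] [CompleteSpace H]

/-- Pure ring-theoretic core of the difference formula for Möbius transforms. -/
theorem stmt16_ring {R : Type*} [Ring R]
    (W11 W12 W21 W22 V11 V12 V21 V22 A B DAinv DBinv : R)
    (hWV1 : W11 * V11 + W12 * V21 = 1)
    (hWV3 : W21 * V11 + W22 * V21 = 0)
    (hVW1 : V11 * W11 + V12 * W21 = 1) (hVW2 : V11 * W12 + V12 * W22 = 0)
    (hVW3 : V21 * W11 + V22 * W21 = 0) (hVW4 : V21 * W12 + V22 * W22 = 1)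
    (hDA1 : (W21 * A + W22) * DAinv = 1) (hDA2 : DAinv * (W21 * A + W22) = 1)
    (hDB1 : (W21 * B + W22) * DBinv = 1) :
    (V11 - A * V21) * (W11 - ((W11 * A + W12) * DAinv) * W21) = 1 ∧
    (W11 - ((W11 * A + W12) * DAinv) * W21) * (V11 - A * V21) = 1 ∧
    (W11 * A + W12) * DAinv - (W11 * B + W12) * DBinv =
      (W11 - ((W11 * A + W12) * DAinv) * W21) * ((A - B) * DBinv) := by
  -- Step 1: (V11 - A V21)(W11 A + W12) = (A V22 - V12)(W21 A + W22)
  have step1 : (V11 - A * V21) * (W11 * A + W12)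
      = (A * V22 - V12) * (W21 * A + W22) := by
    have expand : (V11 - A * V21) * (W11 * A + W12)
        - (A * V22 - V12) * (W21 * A + W22) =
        (V11 * W11 + V12 * W21) * A + (V11 * W12 + V12 * W22)
          - A * ((V21 * W11 + V22 * W21) * A) - A * (V21 * W12 + V22 * W22) := by
      noncomm_ring
    rw [hVW1, hVW2, hVW3, hVW4] at expand
    simp only [one_mul, mul_one, zero_mul, mul_zero, add_zero, sub_zero] at expand
    exact sub_eq_zero.mp (by rw [expand]; abel)
  -- E * TA = A V22 - V12
  have hETA : (V11 - A * V21) * ((W11 * A + W12) * DAinv) = A * V22 - V12 := by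
    calc (V11 - A * V21) * ((W11 * A + W12) * DAinv)
        = ((V11 - A * V21) * (W11 * A + W12)) * DAinv := by rw [mul_assoc]
      _ = (A * V22 - V12) * ((W21 * A + W22) * DAinv) := by rw [step1, mul_assoc]
      _ = A * V22 - V12 := by rw [hDA1, mul_one]
  -- right inverse
  have right : (V11 - A * V21) * (W11 - ((W11 * A + W12) * DAinv) * W21) = 1 := by
    have h1 : (V11 - A * V21) * (W11 - ((W11 * A + W12) * DAinv) * W21)
        = (V11 - A * V21) * W11
          - ((V11 - A * V21) * ((W11 * A + W12) * DAinv)) * W21 := by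
      noncomm_ring
    rw [h1, hETA]
    have expand : (V11 - A * V21) * W11 - (A * V22 - V12) * W21 =
        (V11 * W11 + V12 * W21) - A * (V21 * W11 + V22 * W21) := by noncomm_ring
    rw [expand, hVW1, hVW3, mul_zero, sub_zero]
  -- TA * (W21 A + W22) = W11 A + W12
  have hTADA : ((W11 * A + W12) * DAinv) * (W21 * A + W22) = W11 * A + W12 := by
    rw [mul_assoc, hDA2, mul_one]
  -- left inverse
  have left : (W11 - ((W11 * A + W12) * DAinv) * W21) * (V11 - A * V21) = 1 := by
    have expand : (W11 - ((W11 * A + W12) * DAinv) * W21) * (V11 - A * V21) =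
        (W11 * V11 + W12 * V21) - (W11 * A + W12) * V21
          - ((W11 * A + W12) * DAinv) * (W21 * V11 + W22 * V21)
          + ((W11 * A + W12) * DAinv * (W21 * A + W22)) * V21 := by
      noncomm_ring
    rw [expand, hWV1, hWV3, hTADA]
    noncomm_ring
  -- E * TB = (B - A) * DBinv + (A V22 - V12)
  have step2 : (V11 - A * V21) * (W11 * B + W12)
      = (B - A) + (A * V22 - V12) * (W21 * B + W22) := by
    have expand : (V11 - A * V21) * (W11 * B + W12)
        - ((B - A) + (A * V22 - V12) * (W21 * B + W22)) =
        (V11 * W11 + V12 * W21) * B + (V11 * W12 + V12 * W22)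
          - A * ((V21 * W11 + V22 * W21) * B) - A * (V21 * W12 + V22 * W22)
          - B + A := by
      noncomm_ring
    rw [hVW1, hVW2, hVW3, hVW4] at expand
    simp only [one_mul, mul_one, zero_mul, mul_zero, add_zero, sub_zero] at expand
    exact sub_eq_zero.mp (by rw [expand]; abel)
  have hETB : (V11 - A * V21) * ((W11 * B + W12) * DBinv)
      = (B - A) * DBinv + (A * V22 - V12) := by
    calc (V11 - A * V21) * ((W11 * B + W12) * DBinv)
        = ((V11 - A * V21) * (W11 * B + W12)) * DBinv := by rw [mul_assoc]
      _ = ((B - A) + (A * V22 - V12) * (W21 * B + W22)) * DBinv := by rw [step2]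
      _ = (B - A) * DBinv + (A * V22 - V12) * ((W21 * B + W22) * DBinv) := by
          rw [add_mul, mul_assoc]
      _ = (B - A) * DBinv + (A * V22 - V12) := by rw [hDB1, mul_one]
  refine ⟨right, left, ?_⟩
  -- difference formula
  have key : (V11 - A * V21) * ((W11 * A + W12) * DAinv - (W11 * B + W12) * DBinv)
      = (A - B) * DBinv := by
    rw [mul_sub, hETA, hETB]
    noncomm_ring
  calc (W11 * A + W12) * DAinv - (W11 * B + W12) * DBinv
      = ((W11 - ((W11 * A + W12) * DAinv) * W21) * (V11 - A * V21))
          * ((W11 * A + W12) * DAinv - (W11 * B + W12) * DBinv) := by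
        rw [left, one_mul]
    _ = (W11 - ((W11 * A + W12) * DAinv) * W21)
          * ((V11 - A * V21) * ((W11 * A + W12) * DAinv - (W11 * B + W12) * DBinv)) := by
        rw [mul_assoc]
    _ = (W11 - ((W11 * A + W12) * DAinv) * W21) * ((A - B) * DBinv) := by rw [key]

theorem stmt16 (W11 W12 W21 W22 V11 V12 V21 V22 : H →L[ℂ] H)
    -- `W* J W ≤ J` for `J = [[0, -I], [-I, 0]]`, written blockwise:
    (hJ : ∀ x y : H, (inner ℂ x y : ℂ).re ≤
      (inner ℂ (W11 x + W12 y) (W21 x + W22 y) : ℂ).re)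
    -- `V = [[V11, V12], [V21, V22]]` is the (two-sided) inverse of `W`:
    (hWV1 : W11 ∘L V11 + W12 ∘L V21 = 1) (hWV2 : W11 ∘L V12 + W12 ∘L V22 = 0)
    (hWV3 : W21 ∘L V11 + W22 ∘L V21 = 0) (hWV4 : W21 ∘L V12 + W22 ∘L V22 = 1)
    (hVW1 : V11 ∘L W11 + V12 ∘L W21 = 1) (hVW2 : V11 ∘L W12 + V12 ∘L W22 = 0)
    (hVW3 : V21 ∘L W11 + V22 ∘L W21 = 0) (hVW4 : V21 ∘L W12 + V22 ∘L W22 = 1)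
    -- so `W̃ = Ĵ W⁻¹ Ĵ` has blocks `W̃₁₁ = V11`, `W̃₁₂ = -V12`, `W̃₂₁ = -V21`, `W̃₂₂ = V22`.
    (A B : H →L[ℂ] H) (hA : (opRe A).IsPositive) (hB : (opRe B).IsPositive)
    (DAinv DBinv : H →L[ℂ] H)
    (hDA1 : (W21 ∘L A + W22) ∘L DAinv = 1) (hDA2 : DAinv ∘L (W21 ∘L A + W22) = 1)
    (hDB1 : (W21 ∘L B + W22) ∘L DBinv = 1) (hDB2 : DBinv ∘L (W21 ∘L B + W22) = 1) :
    -- `W̃₁₁ + A W̃₂₁ = V11 - A ∘ V21` is invertible, and the difference formula holds: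
    ∃ Einv : H →L[ℂ] H,
      (V11 - A ∘L V21) ∘L Einv = 1 ∧ Einv ∘L (V11 - A ∘L V21) = 1 ∧
      (W11 ∘L A + W12) ∘L DAinv - (W11 ∘L B + W12) ∘L DBinv =
        Einv ∘L (A - B) ∘L DBinv := by
  simp only [← ContinuousLinearMap.mul_def] at *
  exact ⟨W11 - ((W11 * A + W12) * DAinv) * W21,
    stmt16_ring W11 W12 W21 W22 V11 V12 V21 V22 A B DAinv DBinv
      hWV1 hWV3 hVW1 hVW2 hVW3 hVW4 hDA1 hDA2 hDB1⟩
end
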